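/- arXiv:math/9807051 — 2 statements merged into one kernel-verified Lean document; each statement's English description precedes it below -/
import Mathlib

section
/- In GL_{h,g}(2) (generators a,b,c,d with RTT relations for R̄(h,g)), one has [a, det T] = 2g·c·det T, where det T = ad − bc − (h+g)ac. -/
open Matrix Kronecker
open Fin.NatCast

/-- R̄(h,g) with entries in an algebra A, as an operator on A²⊗A² via the
identification e₁=(0,0), e₂=(0,1), e₃=(1,0), e₄=(1,1). -/
def RbarA {k A : Type*} [CommRing k] [Ring A] [Algebra k A] (h g : k) :
    Matrix (Fin 2 × Fin 2) (Fin 2 × Fin 2) A :=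
  fun p q =>
    algebraMap k A
      ((!![1, h+g, -h-g, h^2-g^2;
           0, 1,   0,    h-g;
           0, 0,   1,    -h+g;
           0, 0,   0,    1] : Matrix (Fin 4) (Fin 4) k)
        (2 * p.1 + p.2 : Fin 4) (2 * q.1 + q.2 : Fin 4))

/-- T₁ = T⊗I₂ for T a 2×2 matrix with (possibly noncommuting) entries. -/
def T1 {A : Type*} [Ring A] (T : Matrix (Fin 2) (Fin 2) A) :
    Matrix (Fin 2 × Fin 2) (Fin 2 × Fin 2) A :=
  T ⊗ₖ (1 : Matrix (Fin 2) (Fin 2) A)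

/-- T₂ = I₂⊗T for T a 2×2 matrix with (possibly noncommuting) entries. -/
def T2 {A : Type*} [Ring A] (T : Matrix (Fin 2) (Fin 2) A) :
    Matrix (Fin 2 × Fin 2) (Fin 2 × Fin 2) A :=
  (1 : Matrix (Fin 2) (Fin 2) A) ⊗ₖ T

/-- In GL_{h,g}(2) (generators a,b,c,d with RTT relations for R̄(h,g)),
[a, det T] = 2g·c·det T, where det T = ad − bc − (h+g)ac. -/
theorem a_detT_commutator (k A : Type*) [CommRing k] [Ring A] [Algebra k A]
    (h g : k) (a b c d : A)
    (hRTT : RbarA h g * (T1 !![a, b; c, d] * T2 !![a, b; c, d]) =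
            (T2 !![a, b; c, d] * T1 !![a, b; c, d]) * RbarA h g) :
    a * (a * d - b * c - algebraMap k A (h + g) * (a * c)) -
      (a * d - b * c - algebraMap k A (h + g) * (a * c)) * a =
    algebraMap k A (2 * g) * (c * (a * d - b * c - algebraMap k A (h + g) * (a * c))) := by
  have e10 := congrFun (congrFun hRTT (0,1)) (0,0)
  have e31 := congrFun (congrFun hRTT (1,1)) (0,1)
  have e11 := congrFun (congrFun hRTT (0,1)) (0,1)
  have e21 := congrFun (congrFun hRTT (1,0)) (0,1)
  have e01 := congrFun (congrFun hRTT (0,0)) (0,1)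
  simp [RbarA, T1, T2, Matrix.mul_apply, Fintype.sum_prod_type, Fin.sum_univ_succ,
    Matrix.one_apply, Matrix.vecHead, Matrix.vecTail, Algebra.algebraMap_eq_smul_one,
    mul_smul_comm, smul_mul_assoc, mul_add, add_mul, smul_smul] at e10 e31 e11 e21 e01
  have hr1 : a * c + (h - g) • (c * c) - c * a = 0 := sub_eq_zero.mpr e10
  have hr2 : c * d - ((h + g) • (c * c) + d * c) = 0 := sub_eq_zero.mpr e31
  have hr3 : a * d + (h - g) • (c * d) - ((h + g) • (c * a) + d * a) = 0 :=
    sub_eq_zero.mpr e11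
  have hr4 : c * b + (-h + g) • (c * d) - ((h + g) • (a * c) + b * c) = 0 :=
    sub_eq_zero.mpr e21
  have hr5 : a * b + (h + g) • (a * d) + ((-h - g) • (c * b) + (h ^ 2 - g ^ 2) • (c * d)) -
      ((h + g) • (a * a) + b * a) = 0 := sub_eq_zero.mpr e01
  rw [← sub_eq_zero]
  simp only [← Algebra.smul_def]
  calc a * (a * d - b * c - (h + g) • (a * c)) -
        (a * d - b * c - (h + g) • (a * c)) * a -
        (2 * g) • (c * (a * d - b * c - (h + g) • (a * c)))
      = a * (a * d + (h - g) • (c * d) - ((h + g) • (c * a) + d * a))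
        - b * (a * c + (h - g) • (c * c) - c * a)
        - (2 * (h + g)) • (a * (a * c + (h - g) • (c * c) - c * a))
        + (2 * g) • ((a * c + (h - g) • (c * c) - c * a) * d)
        + (g - h) • ((c * b + (-h + g) • (c * d) - ((h + g) • (a * c) + b * c)) * c)
        - (2 * g * (g + h)) • ((a * c + (h - g) • (c * c) - c * a) * c)
        - (a * b + (h + g) • (a * d) + ((-h - g) • (c * b) + (h ^ 2 - g ^ 2) • (c * d)) -
            ((h + g) • (a * a) + b * a)) * c
        + (2 * g * (g - h)) • (c * (c * d - ((h + g) • (c * c) + d * c)))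
        - (h + g) • (a * (c * d - ((h + g) • (c * c) + d * c))) := by
        simp only [smul_sub, smul_add, sub_mul, mul_sub, add_mul, mul_add, smul_mul_assoc,
          mul_smul_comm, mul_assoc, smul_smul]
        module
    _ = 0 := by rw [hr1, hr2, hr3, hr4, hr5]; simp
end

section
/- In GL_{h,g}(2), [d, det T] = −2g·c·det T and [b, det T] = 2g·((det T)·d − a·(det T)), where det T = ad − bc − (h+g)ac. In particular, when g = 0 the element det T is central. -/
open Matrix Kronecker
open Fin.NatCast

/-- In GL_{h,g}(2): [d, det T] = −2g·c·det T and
[b, det T] = 2g·((det T)·d − a·(det T)); in particular for g = 0 the quantum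
determinant det T = ad − bc − (h+g)ac is central. -/
theorem d_b_detT_commutators (k A : Type*) [CommRing k] [Ring A] [Algebra k A]
    (h g : k) (a b c d : A)
    (hRTT : RbarA h g * (T1 !![a, b; c, d] * T2 !![a, b; c, d]) =
            (T2 !![a, b; c, d] * T1 !![a, b; c, d]) * RbarA h g) :
    (d * (a * d - b * c - algebraMap k A (h + g) * (a * c)) -
       (a * d - b * c - algebraMap k A (h + g) * (a * c)) * d =
     -(algebraMap k A (2 * g) *
        (c * (a * d - b * c - algebraMap k A (h + g) * (a * c))))) ∧
    (b * (a * d - b * c - algebraMap k A (h + g) * (a * c)) -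
       (a * d - b * c - algebraMap k A (h + g) * (a * c)) * b =
     algebraMap k A (2 * g) *
       ((a * d - b * c - algebraMap k A (h + g) * (a * c)) * d -
        a * (a * d - b * c - algebraMap k A (h + g) * (a * c)))) ∧
    (g = 0 → ∀ x ∈ ({a, b, c, d} : Set A),
      x * (a * d - b * c - algebraMap k A (h + g) * (a * c)) =
        (a * d - b * c - algebraMap k A (h + g) * (a * c)) * x) := by
  classical
  have rel00 : ((h+g) • (a*c) - (h+g) • (c*a) + (h^2-g^2) • (c*c)) = (0 : A) := by
    have e := congrFun (congrFun hRTT ((0 : Fin 2), (0 : Fin 2))) ((0 : Fin 2), (0 : Fin 2))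
    simp [Matrix.mul_apply, Fintype.sum_prod_type, Fin.sum_univ_two, RbarA, T1, T2,
      Matrix.one_apply, Matrix.vecHead, Matrix.vecTail] at e
    simp only [← _root_.map_mul, ← map_pow, ← map_neg, ← map_add, ← map_sub,
      ← Algebra.commutes, ← Algebra.smul_def] at e
    rw [← sub_eq_zero] at e
    rw [← e]
    module
  have rel01 : (-((h+g) • (a*a)) + a*b + (h+g) • (a*d) - b*a - (h+g) • (c*b) + (h^2-g^2) • (c*d)) = (0 : A) := by
    have e := congrFun (congrFun hRTT ((0 : Fin 2), (0 : Fin 2))) ((0 : Fin 2), (1 : Fin 2))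
    simp [Matrix.mul_apply, Fintype.sum_prod_type, Fin.sum_univ_two, RbarA, T1, T2,
      Matrix.one_apply, Matrix.vecHead, Matrix.vecTail] at e
    simp only [← _root_.map_mul, ← map_pow, ← map_neg, ← map_add, ← map_sub,
      ← Algebra.commutes, ← Algebra.smul_def] at e
    rw [← sub_eq_zero] at e
    rw [← e]
    module
  have rel10 : (a*c - c*a + (h-g) • (c*c)) = (0 : A) := by
    have e := congrFun (congrFun hRTT ((0 : Fin 2), (1 : Fin 2))) ((0 : Fin 2), (0 : Fin 2))
    simp [Matrix.mul_apply, Fintype.sum_prod_type, Fin.sum_univ_two, RbarA, T1, T2,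
      Matrix.one_apply, Matrix.vecHead, Matrix.vecTail] at e
    simp only [← _root_.map_mul, ← map_pow, ← map_neg, ← map_add, ← map_sub,
      ← Algebra.commutes, ← Algebra.smul_def] at e
    rw [← sub_eq_zero] at e
    rw [← e]
    module
  have rel11 : (a*d - (h+g) • (c*a) + (h-g) • (c*d) - d*a) = (0 : A) := by
    have e := congrFun (congrFun hRTT ((0 : Fin 2), (1 : Fin 2))) ((0 : Fin 2), (1 : Fin 2))
    simp [Matrix.mul_apply, Fintype.sum_prod_type, Fin.sum_univ_two, RbarA, T1, T2,
      Matrix.one_apply, Matrix.vecHead, Matrix.vecTail] at e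
    simp only [← _root_.map_mul, ← map_pow, ← map_neg, ← map_add, ← map_sub,
      ← Algebra.commutes, ← Algebra.smul_def] at e
    rw [← sub_eq_zero] at e
    rw [← e]
    module
  have rel12 : (b*c + (h+g) • (c*a) - c*b + (h-g) • (d*c)) = (0 : A) := by
    have e := congrFun (congrFun hRTT ((0 : Fin 2), (1 : Fin 2))) ((1 : Fin 2), (0 : Fin 2))
    simp [Matrix.mul_apply, Fintype.sum_prod_type, Fin.sum_univ_two, RbarA, T1, T2,
      Matrix.one_apply, Matrix.vecHead, Matrix.vecTail] at e
    simp only [← _root_.map_mul, ← map_pow, ← map_neg, ← map_add, ← map_sub,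
      ← Algebra.commutes, ← Algebra.smul_def] at e
    rw [← sub_eq_zero] at e
    rw [← e]
    module
  have rel13 : (b*d - (h^2-g^2) • (c*a) + (h-g) • (c*b) - (h-g) • (d*a) - d*b + (h-g) • (d*d)) = (0 : A) := by
    have e := congrFun (congrFun hRTT ((0 : Fin 2), (1 : Fin 2))) ((1 : Fin 2), (1 : Fin 2))
    simp [Matrix.mul_apply, Fintype.sum_prod_type, Fin.sum_univ_two, RbarA, T1, T2,
      Matrix.one_apply, Matrix.vecHead, Matrix.vecTail] at e
    simp only [← _root_.map_mul, ← map_pow, ← map_neg, ← map_add, ← map_sub,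
      ← Algebra.commutes, ← Algebra.smul_def] at e
    rw [← sub_eq_zero] at e
    rw [← e]
    module
  have rel21 : (-((h+g) • (a*c)) - b*c + c*b - (h-g) • (c*d)) = (0 : A) := by
    have e := congrFun (congrFun hRTT ((1 : Fin 2), (0 : Fin 2))) ((0 : Fin 2), (1 : Fin 2))
    simp [Matrix.mul_apply, Fintype.sum_prod_type, Fin.sum_univ_two, RbarA, T1, T2,
      Matrix.one_apply, Matrix.vecHead, Matrix.vecTail] at e
    simp only [← _root_.map_mul, ← map_pow, ← map_neg, ← map_add, ← map_sub,
      ← Algebra.commutes, ← Algebra.smul_def] at e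
    rw [← sub_eq_zero] at e
    rw [← e]
    module
  have rel31 : (-((h+g) • (c*c)) + c*d - d*c) = (0 : A) := by
    have e := congrFun (congrFun hRTT ((1 : Fin 2), (1 : Fin 2))) ((0 : Fin 2), (1 : Fin 2))
    simp [Matrix.mul_apply, Fintype.sum_prod_type, Fin.sum_univ_two, RbarA, T1, T2,
      Matrix.one_apply, Matrix.vecHead, Matrix.vecTail] at e
    simp only [← _root_.map_mul, ← map_pow, ← map_neg, ← map_add, ← map_sub,
      ← Algebra.commutes, ← Algebra.smul_def] at e
    rw [← sub_eq_zero] at e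
    rw [← e]
    module
  have key1 : d * (a * d - b * c - (h + g) • (a * c)) - (a * d - b * c - (h + g) • (a * c)) * d = -((2*g) • (c * (a * d - b * c - (h + g) • (a * c)))) := by
    rw [← sub_eq_zero]
    have hc : ((h+g) • (a*c) - (h+g) • (c*a) + (h^2-g^2) • (c*c)) * d - (a*d - (h+g) • (c*a) + (h-g) • (c*d) - d*a) * d + (g-h) • (c * (a*d - (h+g) • (c*a) + (h-g) • (c*d) - d*a)) + (b*c + (h+g) • (c*a) - c*b + (h-g) • (d*c)) * d + c * (b*d - (h^2-g^2) • (c*a) + (h-g) • (c*b) - (h-g) • (d*a) - d*b + (h-g) • (d*d)) + (2*g) • (c * (-((h+g) • (a*c)) - b*c + c*b - (h-g) • (c*d))) + d * (-((h+g) • (a*c)) - b*c + c*b - (h-g) • (c*d)) + (-((h+g) • (c*c)) + c*d - d*c) * b = (0:A) := by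
      rw [rel00, rel11, rel12, rel13, rel21, rel31]; simp
    rw [← hc]
    simp only [mul_sub, sub_mul, mul_add, add_mul, smul_mul_assoc, mul_smul_comm, smul_smul,
      smul_sub, smul_add, smul_neg, neg_smul, mul_neg, neg_mul, mul_assoc, neg_neg, sub_eq_add_neg,
      neg_add_rev]
    module
  have key2 : b * (a * d - b * c - (h + g) • (a * c)) - (a * d - b * c - (h + g) • (a * c)) * b = (2*g) • ((a * d - b * c - (h + g) • (a * c)) * d - a * (a * d - b * c - (h + g) • (a * c))) := by
    rw [← sub_eq_zero]
    have hc : -((-((h+g) • (a*a)) + a*b + (h+g) • (a*d) - b*a - (h+g) • (c*b) + (h^2-g^2) • (c*d)) * d) + (g-h) • (a * (a*d - (h+g) • (c*a) + (h-g) • (c*d) - d*a)) + a * (b*d - (h^2-g^2) • (c*a) + (h-g) • (c*b) - (h-g) • (d*a) - d*b + (h-g) • (d*d)) - ((g+h) • ((-((h+g) • (a*c)) - b*c + c*b - (h-g) • (c*d)) * d)) + (2*g) • (a * (-((h+g) • (a*c)) - b*c + c*b - (h-g) • (c*d))) + b * (-((h+g) • (a*c)) - b*c + c*b - (h-g) •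 (c*d)) = (0:A) := by
      rw [rel01, rel11, rel13, rel21]; simp
    rw [← hc]
    simp only [mul_sub, sub_mul, mul_add, add_mul, smul_mul_assoc, mul_smul_comm, smul_smul,
      smul_sub, smul_add, smul_neg, neg_smul, mul_neg, neg_mul, mul_assoc, neg_neg, sub_eq_add_neg,
      neg_add_rev]
    module
  refine ⟨?_, ?_, ?_⟩
  · simpa only [Algebra.smul_def] using key1
  · simpa only [Algebra.smul_def] using key2
  · intro hg x hx
    subst hg
    have hca : a * (a * d - b * c - (h + 0) • (a * c)) - (a * d - b * c - (h + 0) • (a * c)) * a = (0:A) := by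
      have hc : ((h+0) • (a*c) - (h+0) • (c*a) + (h^2-0^2) • (c*c)) * a - c * (-((h+0) • (a*a)) + a*b + (h+0) • (a*d) - b*a - (h+0) • (c*b) + (h^2-0^2) • (c*d)) - (a*c - c*a + (h-0) • (c*c)) * b + a * (a*d - (h+0) • (c*a) + (h-0) • (c*d) - d*a) + h • (c * (a*d - (h+0) • (c*a) + (h-0) • (c*d) - d*a)) - (-((h+0) • (a*c)) - b*c + c*b - (h-0) • (c*d)) * a + a * (-((h+0) • (a*c)) - b*c + c*b - (h-0) • (c*d)) = (0:A) := by
        rw [rel00, rel01, rel10, rel11, rel21]; simp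
      rw [← hc]
      simp only [mul_sub, sub_mul, mul_add, add_mul, smul_mul_assoc, mul_smul_comm, smul_smul,
      smul_sub, smul_add, smul_neg, neg_smul, mul_neg, neg_mul, mul_assoc, neg_neg, sub_eq_add_neg,
      neg_add_rev]
      module
    have hcc : c * (a * d - b * c - (h + 0) • (a * c)) - (a * d - b * c - (h + 0) • (a * c)) * c = (0:A) := by
      have hc : ((h+0) • (a*c) - (h+0) • (c*a) + (h^2-0^2) • (c*c)) * c - c * ((h+0) • (a*c) - (h+0) • (c*a) + (h^2-0^2) • (c*c)) - d * (a*c - c*a + (h-0) • (c*c)) - (a*d - (h+0) • (c*a) + (h-0) • (c*d) - d*a) * c + c * (a*d - (h+0) • (c*a) + (h-0) • (c*d) - d*a) + (b*c + (h+0) • (c*a) - c*b + (h-0) • (d*c)) * c + c * (b*c + (h+0) • (c*a) - c*b + (h-0) • (d*c)) + c * (-((h+0) • (a*c)) - b*c + c*b - (h-0) • (c*d)) + (-((h+0) • (c*c)) + c*d - d*c) * a = (0:A) := by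
        rw [rel00, rel10, rel11, rel12, rel21, rel31]; simp
      rw [← hc]
      simp only [mul_sub, sub_mul, mul_add, add_mul, smul_mul_assoc, mul_smul_comm, smul_smul,
      smul_sub, smul_add, smul_neg, neg_smul, mul_neg, neg_mul, mul_assoc, neg_neg, sub_eq_add_neg,
      neg_add_rev]
      module
    have hcb : b * (a * d - b * c - (h + 0) • (a * c)) - (a * d - b * c - (h + 0) • (a * c)) * b = (0:A) := by rw [key2]; simp
    have hcd : d * (a * d - b * c - (h + 0) • (a * c)) - (a * d - b * c - (h + 0) • (a * c)) * d = (0:A) := by rw [key1]; simp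
    simp only [← Algebra.smul_def]
    rw [← sub_eq_zero]
    simp only [Set.mem_insert_iff, Set.mem_singleton_iff] at hx
    rcases hx with rfl | rfl | rfl | rfl
    exacts [hca, hcb, hcc, hcd]
end
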